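/- Let w : E → [0,∞) be bounded measurable, λ ∈ ℝ, and suppose for a controlled Markov chain (Xᵢ) with controls aᵢ that c(Xᵢ,aᵢ) ≤ w(Xᵢ) + λ − E[w(X_{i+1}) | F_i] almost surely for all i. Let φ : ℕ → (0,1] be nonincreasing. Then for all n, k, x: E_{k,x}[Σ_{i=k}^{n+k-1} φ(i) c(X_{i-k},a_{i-k})] ≤ λ·Σ_{i=k}^{n+k-1} φ(i) + φ(k)·w(x). -/

import Mathlib

open MeasureTheory

/-- Abel-summation bound for the discounted reward: if `w ≥ 0` is bounded measurable,
`φ : ℕ → (0,1]` is nonincreasing, the chain starts at `x`, and the sub-solution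
inequality `c(X_i,a_i) ≤ w(X_i) + λ − E[w(X_{i+1})|F_i]` holds a.s. for all `i`, then
`E_{k,x}[Σ_{i=k}^{n+k-1} φ(i) c(X_{i-k},a_{i-k})] ≤ λ Σ_{i=k}^{n+k-1} φ(i) + φ(k) w(x)`. -/
theorem discounted_reward_subsolution_bound
    {Ω E U : Type*} {m0 : MeasurableSpace Ω} [MeasurableSpace E]
    (μ : Measure Ω) [IsProbabilityMeasure μ]
    (ℱ : Filtration ℕ m0)
    (X : ℕ → Ω → E) (hX : ∀ i, Measurable[ℱ i] (X i))
    (a : ℕ → Ω → U)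
    (c : E → U → ℝ) (Cc : ℝ) (hcb : ∀ y u, |c y u| ≤ Cc)
    (w : E → ℝ) (hwm : Measurable w)
    (hw0 : ∀ y, 0 ≤ w y) (Cw : ℝ) (hwb : ∀ y, w y ≤ Cw)
    (lam : ℝ)
    (x : E) (hstart : ∀ᵐ ω ∂μ, X 0 ω = x)
    (hint : ∀ i, Integrable (fun ω => c (X i ω) (a i ω)) μ)
    (hsub : ∀ i, ∀ᵐ ω ∂μ,
      c (X i ω) (a i ω) ≤ w (X i ω) + lam
        - (μ[(fun ω' => w (X (i + 1) ω')) | ℱ i]) ω)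
    (φ : ℕ → ℝ) (hφpos : ∀ i, 0 < φ i) (hφle : ∀ i, φ i ≤ 1)
    (hφmono : ∀ i j, i ≤ j → φ j ≤ φ i)
    (k n : ℕ) :
    ∫ ω, ∑ i ∈ Finset.Ico k (n + k),
        φ i * c (X (i - k) ω) (a (i - k) ω) ∂μ
      ≤ lam * ∑ i ∈ Finset.Ico k (n + k), φ i + φ k * w x := by

  classical
  have hwX_meas : ∀ j, Measurable (fun ω => w (X j ω)) := fun j =>
    hwm.comp ((hX j).mono (ℱ.le j) le_rfl)
  have hwX_int : ∀ j, Integrable (fun ω => w (X j ω)) μ := by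
    intro j
    refine ⟨(hwX_meas j).aestronglyMeasurable, ?_⟩
    refine HasFiniteIntegral.of_bounded (C := Cw) (ae_of_all _ fun ω => ?_)
    rw [Real.norm_eq_abs, abs_of_nonneg (hw0 _)]
    exact hwb _
  set b : ℕ → ℝ := fun j => ∫ ω, w (X j ω) ∂μ with hb
  have hb_nonneg : ∀ j, 0 ≤ b j := fun j => integral_nonneg fun ω => hw0 _
  have b0 : b 0 = w x := by
    have : (fun ω => w (X 0 ω)) =ᵐ[μ] (fun _ => w x) := by
      filter_upwards [hstart] with ω hω using by rw [hω]
    rw [hb]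
    simp only
    rw [integral_congr_ae this, integral_const]
    simp
  have hcond_int : ∀ j, Integrable (μ[(fun ω' => w (X (j+1) ω')) | ℱ j]) μ :=
    fun j => integrable_condExp
  have Estep : ∀ j, ∫ ω, c (X j ω) (a j ω) ∂μ ≤ b j + lam - b (j+1) := by
    intro j
    have h1 : ∫ ω, c (X j ω) (a j ω) ∂μ
        ≤ ∫ ω, (w (X j ω) + lam - (μ[(fun ω' => w (X (j+1) ω')) | ℱ j]) ω) ∂μ := by
      refine integral_mono_ae (hint j) ?_ (hsub j)
      have hadd : Integrable (fun ω => w (X j ω) + lam) μ := by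
        exact (hwX_int j).add (integrable_const lam)
      exact hadd.sub (hcond_int j)
    have hadd : Integrable (fun ω => w (X j ω) + lam) μ := by
      exact (hwX_int j).add (integrable_const lam)
    have h2 : ∫ ω, (w (X j ω) + lam - (μ[(fun ω' => w (X (j+1) ω')) | ℱ j]) ω) ∂μ
        = b j + lam - b (j+1) := by
      rw [integral_sub hadd (hcond_int j)]
      have hadd2 : ∫ ω, (w (X j ω) + lam) ∂μ = b j + lam := by
        rw [integral_add (hwX_int j) (integrable_const lam), integral_const]
        simp [hb]
      rw [hadd2, integral_condExp (ℱ.le j)]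
    linarith [h1, h2.le, h2.ge]
  have hmain : ∫ ω, ∑ i ∈ Finset.Ico k (n + k), φ i * c (X (i - k) ω) (a (i - k) ω) ∂μ
      = ∑ i ∈ Finset.Ico k (n + k), φ i * ∫ ω, c (X (i - k) ω) (a (i - k) ω) ∂μ := by
    rw [integral_finset_sum _ (fun i _ => (hint (i - k)).const_mul _)]
    exact Finset.sum_congr rfl fun i _ => integral_const_mul _ _
  rw [hmain]
  have step : ∀ i ∈ Finset.Ico k (n + k),
      φ i * ∫ ω, c (X (i - k) ω) (a (i - k) ω) ∂μ
        ≤ φ i * lam + (φ i * b (i - k) - φ i * b (i - k + 1)) := by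
    intro i _
    have h := mul_le_mul_of_nonneg_left (Estep (i - k)) (le_of_lt (hφpos i))
    nlinarith [h]
  have hsum : ∑ i ∈ Finset.Ico k (n + k), φ i * ∫ ω, c (X (i - k) ω) (a (i - k) ω) ∂μ
      ≤ ∑ i ∈ Finset.Ico k (n + k), (φ i * lam + (φ i * b (i - k) - φ i * b (i - k + 1))) :=
    Finset.sum_le_sum step
  have hsplit : ∑ i ∈ Finset.Ico k (n + k), (φ i * lam + (φ i * b (i - k) - φ i * b (i - k + 1)))
      = lam * ∑ i ∈ Finset.Ico k (n + k), φ i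
        + ∑ i ∈ Finset.Ico k (n + k), (φ i * b (i - k) - φ i * b (i - k + 1)) := by
    rw [Finset.sum_add_distrib, Finset.mul_sum]
    congr 1
    exact Finset.sum_congr rfl fun i _ => by ring
  have hre : ∑ i ∈ Finset.Ico k (n + k), (φ i * b (i - k) - φ i * b (i - k + 1))
      = ∑ j ∈ Finset.range n, (φ (k + j) * b j - φ (k + j) * b (j + 1)) := by
    rw [Finset.sum_Ico_eq_sum_range]
    simp
  have tele : ∑ j ∈ Finset.range n, (φ (k + j) * b j - φ (k + j) * b (j + 1)) ≤ φ k * w x := by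
    have hle : ∀ j, φ (k + j) * b j - φ (k + j) * b (j + 1)
        ≤ (fun j => φ (k + j) * b j) j - (fun j => φ (k + j) * b j) (j + 1) := by
      intro j
      simp only
      have h := mul_le_mul_of_nonneg_right (hφmono (k + j) (k + (j + 1)) (by omega)) (hb_nonneg (j + 1))
      linarith
    calc ∑ j ∈ Finset.range n, (φ (k + j) * b j - φ (k + j) * b (j + 1))
        ≤ ∑ j ∈ Finset.range n, ((fun j => φ (k + j) * b j) j - (fun j => φ (k + j) * b j) (j + 1)) :=
          Finset.sum_le_sum fun j _ => hle j
      _ = φ (k + 0) * b 0 - φ (k + n) * b n := Finset.sum_range_sub' _ n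
      _ ≤ φ k * b 0 := by
          have h := mul_nonneg (le_of_lt (hφpos (k + n))) (hb_nonneg n)
          simp only [Nat.add_zero]
          linarith
      _ = φ k * w x := by rw [b0]
  calc ∑ i ∈ Finset.Ico k (n + k), φ i * ∫ ω, c (X (i - k) ω) (a (i - k) ω) ∂μ
      ≤ lam * ∑ i ∈ Finset.Ico k (n + k), φ i
        + ∑ j ∈ Finset.range n, (φ (k + j) * b j - φ (k + j) * b (j + 1)) := by
        rw [← hre, ← hsplit]; exact hsum
    _ ≤ lam * ∑ i ∈ Finset.Ico k (n + k), φ i + φ k * w x := by linarith [tele]
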